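/- Let A, B ⊆ ℝⁿ be convex sets, each symmetric about the origin (x ∈ A implies -x ∈ A, and similarly for B), and suppose A ∩ (B + v) is compact for every v ∈ ℝⁿ. Then the function f(v) = Vol(A ∩ (B + v)) is maximized at v = 0, i.e., Vol(A ∩ (B + v)) ≤ Vol(A ∩ B) for all v. -/

import Mathlib

open MeasureTheory
open scoped ENNReal NNReal

section PLHelpers
open Set


lemma my_layercake {α : Type*} [MeasurableSpace α] (μ : Measure α) [SigmaFinite μ]
    {f : α → ℝ≥0∞} (hf : Measurable f) :
    ∫⁻ x, f x ∂μ = ∫⁻ t in Set.Ioi (0:ℝ), μ {x | ENNReal.ofReal t < f x} := by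
  have key : ∀ c : ℝ≥0∞, (volume.restrict (Set.Ioi (0:ℝ))) {t : ℝ | ENNReal.ofReal t < c} = c := by
    intro c
    rw [Measure.restrict_apply' measurableSet_Ioi]
    rcases eq_or_ne c ⊤ with rfl | hc
    · have h1 : {t : ℝ | ENNReal.ofReal t < ⊤} = Set.univ := by
        ext t; simp [ENNReal.ofReal_lt_top]
      rw [h1, Set.univ_inter]; simp
    · have h1 : {t : ℝ | ENNReal.ofReal t < c} ∩ Set.Ioi 0 = Set.Ioo 0 c.toReal := by
        ext t
        simp only [Set.mem_inter_iff, Set.mem_setOf_eq, Set.mem_Ioi, Set.mem_Ioo]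
        constructor
        · rintro ⟨h1, h2⟩
          exact ⟨h2, (ENNReal.ofReal_lt_iff_lt_toReal (le_of_lt h2) hc).1 h1⟩
        · rintro ⟨h1, h2⟩
          exact ⟨(ENNReal.ofReal_lt_iff_lt_toReal (le_of_lt h1) hc).2 h2, h1⟩
      rw [h1, Real.volume_Ioo, sub_zero, ENNReal.ofReal_toReal hc]
  set E : Set (α × ℝ) := {p : α × ℝ | ENNReal.ofReal p.2 < f p.1} with hE
  have hEm : MeasurableSet E := by
    apply measurableSet_lt
    · exact ENNReal.measurable_ofReal.comp measurable_snd
    · exact hf.comp measurable_fst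
  set I : α × ℝ → ℝ≥0∞ := E.indicator 1 with hI
  have hx : ∀ x, (∫⁻ t in Set.Ioi (0:ℝ), I (x, t)) = f x := by
    intro x
    have h2 : (fun t : ℝ => I (x, t)) = ({t : ℝ | ENNReal.ofReal t < f x}.indicator 1) := by
      funext t
      by_cases h : ENNReal.ofReal t < f x
      · simp [hI, hE, Set.indicator_apply, Set.mem_setOf_eq, h]
      · simp [hI, hE, Set.indicator_apply, Set.mem_setOf_eq, h]
    rw [h2]
    rw [lintegral_indicator_one (measurableSet_lt ENNReal.measurable_ofReal measurable_const)]
    exact key (f x)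
  have ht : ∀ t : ℝ, (∫⁻ x, I (x, t) ∂μ) = μ {x | ENNReal.ofReal t < f x} := by
    intro t
    have h2 : (fun x : α => I (x, t)) = ({x : α | ENNReal.ofReal t < f x}.indicator 1) := by
      funext x
      by_cases h : ENNReal.ofReal t < f x
      · simp [hI, hE, Set.indicator_apply, Set.mem_setOf_eq, h]
      · simp [hI, hE, Set.indicator_apply, Set.mem_setOf_eq, h]
    rw [h2]
    exact lintegral_indicator_one (hf (measurableSet_Ioi (a := ENNReal.ofReal t)))
  calc ∫⁻ x, f x ∂μ = ∫⁻ x, (∫⁻ t in Set.Ioi (0:ℝ), I (x, t)) ∂μ :=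
        lintegral_congr fun x => (hx x).symm
    _ = ∫⁻ t in Set.Ioi (0:ℝ), (∫⁻ x, I (x, t) ∂μ) := by
        apply lintegral_lintegral_swap
        exact (Measurable.indicator measurable_const hEm).aemeasurable
    _ = ∫⁻ t in Set.Ioi (0:ℝ), μ {x | ENNReal.ofReal t < f x} :=
        lintegral_congr ht

lemma half_image_vol (F : Set ℝ) (c : ℝ) :
    volume ((fun x => x / 2 + c) '' F) = 2⁻¹ * volume F := by
  have h1 : (fun x : ℝ => x / 2 + c) '' F = (fun y : ℝ => y + c) '' ((fun x : ℝ => (2:ℝ)⁻¹ • x) '' F) := by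
    rw [← Set.image_comp]
    refine Set.image_congr fun x _ => ?_
    simp [Function.comp, smul_eq_mul]; ring
  rw [h1, Set.image_add_right, measure_preimage_add_right, Set.image_smul,
    Measure.addHaar_smul]
  rw [show |(2:ℝ)⁻¹ ^ Module.finrank ℝ ℝ| = 1/2 by
      rw [Module.finrank_self]; norm_num]
  rw [show ENNReal.ofReal (1/2 : ℝ) = 2⁻¹ by
      rw [one_div, ENNReal.ofReal_inv_of_pos (by norm_num)]; norm_num]

lemma onedim_compact {F G : Set ℝ} (H : Set ℝ) (hF : IsCompact F) (hG : IsCompact G)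
    (hFne : F.Nonempty) (hGne : G.Nonempty)
    (hmid : ∀ a ∈ F, ∀ b ∈ G, (a + b) / 2 ∈ H) :
    2⁻¹ * volume F + 2⁻¹ * volume G ≤ volume H := by
  obtain ⟨a, haF⟩ := hF.exists_isGreatest hFne
  obtain ⟨b, hbG⟩ := hG.exists_isLeast hGne
  set U := (fun x : ℝ => x / 2 + b / 2) '' F with hU
  set V := (fun y : ℝ => y / 2 + a / 2) '' G with hV
  have hUH : U ⊆ H := by
    rintro _ ⟨x, hx, rfl⟩
    have := hmid x hx b hbG.1
    convert this using 1; ring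
  have hVH : V ⊆ H := by
    rintro _ ⟨y, hy, rfl⟩
    have := hmid a haF.1 y hy
    convert this using 1; ring
  have hUc : IsCompact U := hF.image (by continuity)
  have hVc : IsCompact V := hG.image (by continuity)
  have hUV : U ∩ V ⊆ {(a + b) / 2} := by
    rintro z ⟨hzU, hzV⟩
    obtain ⟨x, hx, hxz⟩ := hzU
    obtain ⟨y, hy, hyz⟩ := hzV
    simp only at hxz hyz
    have h1 : x ≤ a := haF.2 hx
    have h2 : b ≤ y := hbG.2 hy
    simp only [Set.mem_singleton_iff]
    linarith
  have hsum : volume U + volume V ≤ volume (U ∪ V) := by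
    have := measure_union_add_inter (μ := volume) U hVc.measurableSet
    have hz : volume (U ∩ V) = 0 :=
      le_antisymm (le_trans (measure_mono hUV) (by simp)) (zero_le)
    rw [hz] at this
    simp only [add_zero] at this
    rw [this]
  calc 2⁻¹ * volume F + 2⁻¹ * volume G = volume U + volume V := by
        rw [hU, hV, half_image_vol, half_image_vol]
    _ ≤ volume (U ∪ V) := hsum
    _ ≤ volume H := measure_mono (Set.union_subset hUH hVH)

lemma onedim {F G : Set ℝ} (H : Set ℝ) (hF : MeasurableSet F) (hG : MeasurableSet G)
    (hFne : F.Nonempty) (hGne : G.Nonempty)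
    (hmid : ∀ a ∈ F, ∀ b ∈ G, (a + b) / 2 ∈ H) :
    2⁻¹ * volume F + 2⁻¹ * volume G ≤ volume H := by
  obtain ⟨a₀, ha₀⟩ := hFne
  obtain ⟨b₀, hb₀⟩ := hGne
  have key : ∀ K L : Set ℝ, K ⊆ F → L ⊆ G → IsCompact K → IsCompact L →
      2⁻¹ * volume K + 2⁻¹ * volume L ≤ volume H := by
    intro K L hKF hLG hKc hLc
    have h := onedim_compact H (hKc.union isCompact_singleton) (hLc.union isCompact_singleton)
      ⟨a₀, Set.mem_union_right _ rfl⟩ ⟨b₀, Set.mem_union_right _ rfl⟩ ?_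
    · refine le_trans ?_ h
      exact add_le_add (mul_le_mul_right (measure_mono Set.subset_union_left) _)
        (mul_le_mul_right (measure_mono Set.subset_union_left) _)
    · intro a ha b hb
      rcases ha with ha | ha <;> rcases hb with hb | hb
      · exact hmid a (hKF ha) b (hLG hb)
      · exact hmid a (hKF ha) b (by rwa [Set.mem_singleton_iff.1 hb])
      · exact hmid a (by rwa [Set.mem_singleton_iff.1 ha]) b (hLG hb)
      · exact hmid a (by rwa [Set.mem_singleton_iff.1 ha]) b
          (by rwa [Set.mem_singleton_iff.1 hb])
  rcases eq_or_ne (volume H) ⊤ with hH | hH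
  · rw [hH]; exact le_top
  have hFfin : volume F ≠ ⊤ := by
    intro hFi
    obtain ⟨K, hKF, hKc, hKbig⟩ := hF.exists_lt_isCompact
      (show 2 * volume H + 1 < volume F by rw [hFi]; exact lt_top_iff_ne_top.2 (by
        simp [ENNReal.add_ne_top, ENNReal.mul_ne_top, hH]))
    have := key K {b₀} hKF (Set.singleton_subset_iff.2 hb₀) hKc isCompact_singleton
    rw [Real.volume_singleton, mul_zero, add_zero] at this
    have h2 : 2 * volume H + 1 ≤ 2 * volume H := by
      calc 2 * volume H + 1 ≤ volume K := le_of_lt hKbig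
        _ = 2 * (2⁻¹ * volume K) := by
            rw [← mul_assoc, ENNReal.mul_inv_cancel (by norm_num) (by norm_num), one_mul]
        _ ≤ 2 * volume H := by exact mul_le_mul_right this 2
    exact absurd h2 (not_le.2 (ENNReal.lt_add_right
      (by simp [ENNReal.mul_ne_top, hH]) one_ne_zero))
  have hGfin : volume G ≠ ⊤ := by
    intro hGi
    obtain ⟨L, hLG, hLc, hLbig⟩ := hG.exists_lt_isCompact
      (show 2 * volume H + 1 < volume G by rw [hGi]; exact lt_top_iff_ne_top.2 (by
        simp [ENNReal.add_ne_top, ENNReal.mul_ne_top, hH]))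
    have := key {a₀} L (Set.singleton_subset_iff.2 ha₀) hLG isCompact_singleton hLc
    rw [Real.volume_singleton, mul_zero, zero_add] at this
    have h2 : 2 * volume H + 1 ≤ 2 * volume H := by
      calc 2 * volume H + 1 ≤ volume L := le_of_lt hLbig
        _ = 2 * (2⁻¹ * volume L) := by
            rw [← mul_assoc, ENNReal.mul_inv_cancel (by norm_num) (by norm_num), one_mul]
        _ ≤ 2 * volume H := by exact mul_le_mul_right this 2
    exact absurd h2 (not_le.2 (ENNReal.lt_add_right
      (by simp [ENNReal.mul_ne_top, hH]) one_ne_zero))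
  refine ENNReal.le_of_forall_pos_le_add fun ε hε _ => ?_
  obtain ⟨K, hKF, hKc, hKclose⟩ := hF.exists_isCompact_lt_add hFfin (ε := ε) (by simpa using hε.ne')
  obtain ⟨L, hLG, hLc, hLclose⟩ := hG.exists_isCompact_lt_add hGfin (ε := ε) (by simpa using hε.ne')
  calc 2⁻¹ * volume F + 2⁻¹ * volume G
      ≤ 2⁻¹ * (volume K + ε) + 2⁻¹ * (volume L + ε) := by
        exact add_le_add (mul_le_mul_right hKclose.le _) (mul_le_mul_right hLclose.le _)
    _ = (2⁻¹ * volume K + 2⁻¹ * volume L) + (2⁻¹ * ε + 2⁻¹ * ε) := by ring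
    _ ≤ volume H + ε := by
        refine add_le_add (key K L hKF hLG hKc hLc) ?_
        rw [← two_mul, ← mul_assoc, ENNReal.mul_inv_cancel (by norm_num) (by norm_num), one_mul]

lemma my_amgm (a b : ℝ≥0∞) : a * b ≤ (2⁻¹ * a + 2⁻¹ * b) ^ 2 := by
  rcases eq_or_ne a 0 with rfl | ha0; · simp
  rcases eq_or_ne b 0 with rfl | hb0; · simp
  rcases eq_or_ne a ⊤ with rfl | hat
  · have h1 : (2⁻¹ : ℝ≥0∞) * ⊤ = ⊤ := by simp [ENNReal.mul_top]
    rw [h1, top_add]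
    exact le_top.trans_eq rfl
  rcases eq_or_ne b ⊤ with rfl | hbt
  · have h1 : (2⁻¹ : ℝ≥0∞) * ⊤ = ⊤ := by simp [ENNReal.mul_top]
    rw [h1, add_top]
    exact le_top.trans_eq rfl
  lift a to ℝ≥0 using hat
  lift b to ℝ≥0 using hbt
  have hnn : (a : ℝ≥0) * b ≤ (2⁻¹ * a + 2⁻¹ * b) ^ 2 := by
    rw [← NNReal.coe_le_coe]
    push_cast
    nlinarith [sq_nonneg ((a:ℝ) - b), (a:ℝ≥0).coe_nonneg, (b:ℝ≥0).coe_nonneg]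
  have h2 : ((2⁻¹ : ℝ≥0) : ℝ≥0∞) = 2⁻¹ := by
    rw [ENNReal.coe_inv two_ne_zero]; norm_num
  rw [← ENNReal.coe_mul]
  refine le_trans (ENNReal.coe_le_coe.2 hnn) (le_of_eq ?_)
  push_cast
  rfl

lemma pl1_norm (f g h : ℝ → ℝ≥0∞) (hf : Measurable f) (hg : Measurable g) (hh : Measurable h)
    (hyp : ∀ x y, f x * g y ≤ h ((x + y) / 2) ^ 2)
    (hsf : (⨆ x, f x) = 1) (hsg : (⨆ x, g x) = 1) :
    (∫⁻ x, f x) * (∫⁻ x, g x) ≤ (∫⁻ x, h x) ^ 2 := by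
  set Φf : ℝ → ℝ≥0∞ := fun t => volume {x | ENNReal.ofReal t < f x} with hΦf
  set Φg : ℝ → ℝ≥0∞ := fun t => volume {x | ENNReal.ofReal t < g x} with hΦg
  set Φh : ℝ → ℝ≥0∞ := fun t => volume {x | ENNReal.ofReal t < h x} with hΦh
  have antimono : ∀ (F : ℝ → ℝ≥0∞), Antitone (fun t => volume {x | ENNReal.ofReal t < F x}) := by
    intro F s t hst
    exact measure_mono fun x hx => lt_of_le_of_lt (ENNReal.ofReal_le_ofReal hst) hx
  -- pointwise superlevel bound on (0,1)
  have step : ∀ t ∈ Set.Ioo (0:ℝ) 1, 2⁻¹ * Φf t + 2⁻¹ * Φg t ≤ Φh t := by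
    intro t ht
    have hu0 : (0:ℝ≥0∞) < ENNReal.ofReal t := ENNReal.ofReal_pos.2 ht.1
    have hu1 : ENNReal.ofReal t < 1 := ENNReal.ofReal_lt_one.2 ht.2
    have hFne : {x | ENNReal.ofReal t < f x}.Nonempty := by
      have : ENNReal.ofReal t < ⨆ x, f x := by rw [hsf]; exact hu1
      obtain ⟨x, hx⟩ := lt_iSup_iff.1 this
      exact ⟨x, hx⟩
    have hGne : {x | ENNReal.ofReal t < g x}.Nonempty := by
      have : ENNReal.ofReal t < ⨆ x, g x := by rw [hsg]; exact hu1
      obtain ⟨x, hx⟩ := lt_iSup_iff.1 this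
      exact ⟨x, hx⟩
    refine onedim _ (hf measurableSet_Ioi) (hg measurableSet_Ioi) hFne hGne ?_
    intro a ha b hb
    have h1 : ENNReal.ofReal t * ENNReal.ofReal t < f a * g b := ENNReal.mul_lt_mul ha hb
    have h2 : f a * g b ≤ h ((a + b) / 2) ^ 2 := hyp a b
    show ENNReal.ofReal t < h ((a + b) / 2)
    by_contra hcon
    push_neg at hcon
    have h3 : h ((a + b) / 2) ^ 2 ≤ ENNReal.ofReal t * ENNReal.ofReal t := by
      rw [← sq]; exact pow_le_pow_left' hcon 2
    exact absurd (h1.trans_le (h2.trans h3)) (lt_irrefl _)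
  -- vanishing of Φf beyond 1
  have vanish : ∀ (F : ℝ → ℝ≥0∞), (⨆ x, F x) = 1 →
      ∀ t : ℝ, (1:ℝ) ≤ t → volume {x | ENNReal.ofReal t < F x} = 0 := by
    intro F hsF t h1t
    have : {x | ENNReal.ofReal t < F x} = ∅ := by
      ext x
      simp only [Set.mem_setOf_eq, Set.mem_empty_iff_false, iff_false, not_lt]
      calc F x ≤ ⨆ x, F x := le_iSup F x
        _ = 1 := hsF
        _ ≤ ENNReal.ofReal t := by
            rw [← ENNReal.ofReal_one]; exact ENNReal.ofReal_le_ofReal h1t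
    rw [this, measure_empty]
  -- restricted integral equals full integral for f, g
  have split : ∀ (Φ : ℝ → ℝ≥0∞), Measurable Φ → (∀ t : ℝ, (1:ℝ) ≤ t → Φ t = 0) →
      (∫⁻ t in Set.Ioi (0:ℝ), Φ t) = ∫⁻ t in Set.Ioo (0:ℝ) 1, Φ t := by
    intro Φ hΦ hvan
    have hsets : Set.Ioi (0:ℝ) = Set.Ioo (0:ℝ) 1 ∪ Set.Ici (1:ℝ) := by
      ext t
      simp only [Set.mem_Ioi, Set.mem_union, Set.mem_Ioo, Set.mem_Ici]
      constructor
      · intro h0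
        rcases lt_or_ge t 1 with h1 | h1
        exacts [Or.inl ⟨h0, h1⟩, Or.inr h1]
      · rintro (⟨h0, _⟩ | h1)
        exacts [h0, lt_of_lt_of_le one_pos h1]
    rw [hsets, lintegral_union measurableSet_Ici (by
      rw [Set.disjoint_left]; rintro t ⟨_, h1⟩ h2; simp only [Set.mem_Ici] at h2; linarith)]
    have : (∫⁻ t in Set.Ici (1:ℝ), Φ t) = 0 := by
      rw [← lintegral_zero (μ := volume.restrict (Set.Ici (1:ℝ)))]
      refine setLIntegral_congr_fun measurableSet_Ici ?_
      exact fun t ht => hvan t ht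
    rw [this, add_zero]
  have hΦfm : Measurable Φf := (antimono f).measurable
  have hΦgm : Measurable Φg := (antimono g).measurable
  have hΦhm : Measurable Φh := (antimono h).measurable
  have main : 2⁻¹ * (∫⁻ x, f x) + 2⁻¹ * (∫⁻ x, g x) ≤ ∫⁻ x, h x := by
    calc 2⁻¹ * (∫⁻ x, f x) + 2⁻¹ * (∫⁻ x, g x)
        = 2⁻¹ * (∫⁻ t in Set.Ioo (0:ℝ) 1, Φf t) + 2⁻¹ * (∫⁻ t in Set.Ioo (0:ℝ) 1, Φg t) := by
          rw [my_layercake volume hf, my_layercake volume hg, split Φf hΦfm (vanish f hsf),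
            split Φg hΦgm (vanish g hsg)]
      _ = ∫⁻ t in Set.Ioo (0:ℝ) 1, (2⁻¹ * Φf t + 2⁻¹ * Φg t) := by
          rw [lintegral_add_left (hΦfm.const_mul _), lintegral_const_mul _ hΦfm,
            lintegral_const_mul _ hΦgm]
      _ ≤ ∫⁻ t in Set.Ioo (0:ℝ) 1, Φh t := by
          refine setLIntegral_mono hΦhm ?_
          exact step
      _ ≤ ∫⁻ t in Set.Ioi (0:ℝ), Φh t := by
          exact lintegral_mono' (Measure.restrict_mono Set.Ioo_subset_Ioi_self le_rfl) le_rfl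
      _ = ∫⁻ x, h x := (my_layercake volume hh).symm
  calc (∫⁻ x, f x) * (∫⁻ x, g x) ≤ (2⁻¹ * (∫⁻ x, f x) + 2⁻¹ * (∫⁻ x, g x)) ^ 2 := my_amgm _ _
    _ ≤ (∫⁻ x, h x) ^ 2 := pow_le_pow_left' main 2

lemma pl1 (f g h : ℝ → ℝ≥0∞) (hf : Measurable f) (hg : Measurable g) (hh : Measurable h)
    (hyp : ∀ x y, f x * g y ≤ h ((x + y) / 2) ^ 2) :
    (∫⁻ x, f x) * (∫⁻ x, g x) ≤ (∫⁻ x, h x) ^ 2 := by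
  have bdd : ∀ N : ℕ, (∫⁻ x, min (f x) N) * (∫⁻ x, min (g x) N) ≤ (∫⁻ z, h z) ^ 2 := by
    intro N
    set f' : ℝ → ℝ≥0∞ := fun x => min (f x) N with hf'def
    set g' : ℝ → ℝ≥0∞ := fun x => min (g x) N with hg'def
    have hf' : Measurable f' := hf.min measurable_const
    have hg' : Measurable g' := hg.min measurable_const
    have hyp' : ∀ x y, f' x * g' y ≤ h ((x + y) / 2) ^ 2 := fun x y =>
      le_trans (mul_le_mul' (min_le_left _ _) (min_le_left _ _)) (hyp x y)
    set c := ⨆ x, f' x with hc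
    set d := ⨆ x, g' x with hd
    rcases eq_or_ne c 0 with hc0 | hc0
    · have hz : ∀ x, f' x = 0 := fun x => le_antisymm (hc0 ▸ le_iSup f' x) (zero_le)
      have : (∫⁻ x, f' x) = 0 := by
        rw [lintegral_congr hz]; simp
      rw [this, zero_mul]; exact zero_le
    rcases eq_or_ne d 0 with hd0 | hd0
    · have hz : ∀ x, g' x = 0 := fun x => le_antisymm (hd0 ▸ le_iSup g' x) (zero_le)
      have : (∫⁻ x, g' x) = 0 := by
        rw [lintegral_congr hz]; simp
      rw [this, mul_zero]; exact zero_le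
    have hct : c ≠ ⊤ := by
      refine ne_top_of_le_ne_top (ENNReal.natCast_ne_top N) (iSup_le fun x => min_le_right _ _)
    have hdt : d ≠ ⊤ := by
      refine ne_top_of_le_ne_top (ENNReal.natCast_ne_top N) (iSup_le fun x => min_le_right _ _)
    set s : ℝ≥0∞ := ((NNReal.sqrt (c.toNNReal * d.toNNReal) : ℝ≥0) : ℝ≥0∞) with hs
    have hs2 : s ^ 2 = c * d := by
      rw [hs, ← ENNReal.coe_pow, NNReal.sq_sqrt, ENNReal.coe_mul,
        ENNReal.coe_toNNReal hct, ENNReal.coe_toNNReal hdt]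
    have hs0 : s ≠ 0 := by
      intro hzero
      have : s ^ 2 = 0 := by rw [hzero]; simp
      rw [hs2] at this
      exact absurd this (mul_ne_zero hc0 hd0)
    have hst : s ≠ ⊤ := ENNReal.coe_ne_top
    have hinv2 : (s⁻¹) ^ 2 = c⁻¹ * d⁻¹ := by
      rw [← ENNReal.inv_pow, hs2, ENNReal.mul_inv (Or.inl hc0) (Or.inl hct)]
    have key := pl1_norm (fun x => c⁻¹ * f' x) (fun x => d⁻¹ * g' x) (fun x => s⁻¹ * h x)
      (hf'.const_mul _) (hg'.const_mul _) (hh.const_mul _) ?_ ?_ ?_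
    · rw [lintegral_const_mul _ hf', lintegral_const_mul _ hg', lintegral_const_mul _ hh] at key
      have expand : (s⁻¹ * ∫⁻ x, h x) ^ 2 = (c⁻¹ * d⁻¹) * (∫⁻ x, h x) ^ 2 := by
        rw [mul_pow, hinv2]
      rw [expand] at key
      calc (∫⁻ x, f' x) * (∫⁻ x, g' x)
          = (c * d) * ((c⁻¹ * ∫⁻ x, f' x) * (d⁻¹ * ∫⁻ x, g' x)) := by
            rw [mul_mul_mul_comm c⁻¹ _ d⁻¹ _, ← mul_assoc (c*d)]
            rw [mul_mul_mul_comm c d c⁻¹ d⁻¹, ENNReal.mul_inv_cancel hc0 hct,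
              ENNReal.mul_inv_cancel hd0 hdt, one_mul, one_mul]
        _ ≤ (c * d) * ((c⁻¹ * d⁻¹) * (∫⁻ x, h x) ^ 2) := mul_le_mul_right key _
        _ = (∫⁻ x, h x) ^ 2 := by
            rw [← mul_assoc, mul_mul_mul_comm c d c⁻¹ d⁻¹, ENNReal.mul_inv_cancel hc0 hct,
              ENNReal.mul_inv_cancel hd0 hdt, one_mul, one_mul]
    · intro x y
      calc c⁻¹ * f' x * (d⁻¹ * g' y) = (c⁻¹ * d⁻¹) * (f' x * g' y) := by ring
        _ ≤ (c⁻¹ * d⁻¹) * h ((x + y) / 2) ^ 2 := mul_le_mul_right (hyp' x y) _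
        _ = (s⁻¹ * h ((x + y) / 2)) ^ 2 := by rw [mul_pow, hinv2]
    · rw [← ENNReal.mul_iSup, ← hc]; exact ENNReal.inv_mul_cancel hc0 hct
    · rw [← ENNReal.mul_iSup, ← hd]; exact ENNReal.inv_mul_cancel hd0 hdt
  have limf : (⨆ N : ℕ, ∫⁻ x, min (f x) N) = ∫⁻ x, f x := by
    rw [← lintegral_iSup (fun N => hf.min measurable_const)
      (fun N M hNM x => min_le_min le_rfl (Nat.cast_le.2 hNM))]
    refine lintegral_congr fun x => ?_
    have h1 : (⨆ N : ℕ, min (f x) (N:ℝ≥0∞)) = f x ⊓ ⨆ N : ℕ, (N:ℝ≥0∞) := (inf_iSup_eq _ _).symm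
    rw [h1, ENNReal.iSup_natCast, inf_top_eq]
  have limg : (⨆ N : ℕ, ∫⁻ x, min (g x) N) = ∫⁻ x, g x := by
    rw [← lintegral_iSup (fun N => hg.min measurable_const)
      (fun N M hNM x => min_le_min le_rfl (Nat.cast_le.2 hNM))]
    refine lintegral_congr fun x => ?_
    have h1 : (⨆ N : ℕ, min (g x) (N:ℝ≥0∞)) = g x ⊓ ⨆ N : ℕ, (N:ℝ≥0∞) := (inf_iSup_eq _ _).symm
    rw [h1, ENNReal.iSup_natCast, inf_top_eq]
  rw [← limf, ← limg, ENNReal.iSup_mul]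
  refine iSup_le fun N => ?_
  rw [ENNReal.mul_iSup]
  refine iSup_le fun M => ?_
  refine le_trans (mul_le_mul' ?_ ?_) (bdd (max N M))
  · exact lintegral_mono fun x => min_le_min le_rfl (Nat.cast_le.2 (le_max_left N M))
  · exact lintegral_mono fun x => min_le_min le_rfl (Nat.cast_le.2 (le_max_right N M))

lemma pl_pi : ∀ (n : ℕ) (f g h : (Fin n → ℝ) → ℝ≥0∞), Measurable f → Measurable g →
    Measurable h → (∀ x y, f x * g y ≤ h ((2⁻¹ : ℝ) • (x + y)) ^ 2) →
    (∫⁻ x, f x) * (∫⁻ y, g y) ≤ (∫⁻ z, h z) ^ 2 := by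
  intro n
  induction n with
  | zero =>
    intro f g h hf hg hh hyp
    have hu : (volume : Measure (Fin 0 → ℝ)) Set.univ = 1 := by
      simp [volume_pi, Measure.pi_univ]
    rw [lintegral_unique f, lintegral_unique g, lintegral_unique h, hu, mul_one, mul_one, mul_one]
    have hkey := hyp default default
    set x0 : Fin 0 → ℝ := default with hx0
    simp only [show ∀ z : Fin 0 → ℝ, f z = f x0 from fun z => congrArg f (Subsingleton.elim z x0),
      show ∀ z : Fin 0 → ℝ, g z = g x0 from fun z => congrArg g (Subsingleton.elim z x0),
      show ∀ z : Fin 0 → ℝ, h z = h x0 from fun z => congrArg h (Subsingleton.elim z x0)]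
      at hkey ⊢
    exact hkey
  | succ n IH =>
    intro f g h hf hg hh hyp
    set e := MeasurableEquiv.piFinSuccAbove (fun _ : Fin (n+1) => ℝ) 0 with he
    have mp : MeasurePreserving e volume ((volume : Measure ℝ).prod (volume : Measure (Fin n → ℝ))) := by
      have h1 := measurePreserving_piFinSuccAbove (fun _ : Fin (n+1) => (volume : Measure ℝ)) 0
      rw [volume_pi (α := fun _ : Fin (n+1) => ℝ), volume_pi (α := fun _ : Fin n => ℝ)]
      exact h1
    have eadd : ∀ x y : Fin (n+1) → ℝ, e (x + y) = e x + e y := fun x y => rfl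
    have esmul : ∀ (c : ℝ) (x : Fin (n+1) → ℝ), e (c • x) = c • e x := fun c x => rfl
    have esymm_add : ∀ p q : ℝ × (Fin n → ℝ), e.symm (p + q) = e.symm p + e.symm q := by
      intro p q
      apply e.injective
      rw [e.apply_symm_apply, eadd, e.apply_symm_apply, e.apply_symm_apply]
    have esymm_smul : ∀ (c : ℝ) (p : ℝ × (Fin n → ℝ)), e.symm (c • p) = c • e.symm p := by
      intro c p
      apply e.injective
      rw [e.apply_symm_apply, esmul, e.apply_symm_apply]
    have hf2 : Measurable (fun p : ℝ × (Fin n → ℝ) => f (e.symm p)) :=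
      hf.comp e.symm.measurable
    have hg2 : Measurable (fun p : ℝ × (Fin n → ℝ) => g (e.symm p)) :=
      hg.comp e.symm.measurable
    have hh2 : Measurable (fun p : ℝ × (Fin n → ℝ) => h (e.symm p)) :=
      hh.comp e.symm.measurable
    set F : ℝ → ℝ≥0∞ := fun t => ∫⁻ y, f (e.symm (t, y)) with hF
    set G : ℝ → ℝ≥0∞ := fun t => ∫⁻ y, g (e.symm (t, y)) with hG
    set H : ℝ → ℝ≥0∞ := fun t => ∫⁻ y, h (e.symm (t, y)) with hH
    have hFm : Measurable F := Measurable.lintegral_prod_right hf2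
    have hGm : Measurable G := Measurable.lintegral_prod_right hg2
    have hHm : Measurable H := Measurable.lintegral_prod_right hh2
    have key : ∀ t s : ℝ, F t * G s ≤ H ((t + s) / 2) ^ 2 := by
      intro t s
      refine IH (fun y => f (e.symm (t, y))) (fun y => g (e.symm (s, y)))
        (fun y => h (e.symm ((t + s) / 2, y)))
        (hf.comp (e.symm.measurable.comp (measurable_const.prodMk measurable_id)))
        (hg.comp (e.symm.measurable.comp (measurable_const.prodMk measurable_id)))
        (hh.comp (e.symm.measurable.comp (measurable_const.prodMk measurable_id))) ?_
      intro y z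
      have hkey := hyp (e.symm (t, y)) (e.symm (s, z))
      have e1 : (2⁻¹ : ℝ) • (e.symm (t, y) + e.symm (s, z))
          = e.symm ((2⁻¹ : ℝ) • ((t, y) + (s, z))) := by
        rw [esymm_smul, esymm_add]
      have e2 : ((2⁻¹ : ℝ) • ((t, y) + (s, z)) : ℝ × (Fin n → ℝ))
          = ((t + s) / 2, (2⁻¹ : ℝ) • (y + z)) := by
        refine Prod.ext ?_ rfl
        show (2⁻¹ : ℝ) * (t + s) = (t + s) / 2
        ring
      rw [e1, e2] at hkey
      exact hkey
    have if_ : (∫⁻ x, f x) = ∫⁻ t, F t := by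
      have h1 := mp.lintegral_comp (hf.comp e.symm.measurable)
      simp only [Function.comp_apply, MeasurableEquiv.symm_apply_apply] at h1
      rw [h1, lintegral_prod _ hf2.aemeasurable]
    have ig_ : (∫⁻ x, g x) = ∫⁻ t, G t := by
      have h1 := mp.lintegral_comp (hg.comp e.symm.measurable)
      simp only [Function.comp_apply, MeasurableEquiv.symm_apply_apply] at h1
      rw [h1, lintegral_prod _ hg2.aemeasurable]
    have ih_ : (∫⁻ x, h x) = ∫⁻ t, H t := by
      have h1 := mp.lintegral_comp (hh.comp e.symm.measurable)
      simp only [Function.comp_apply, MeasurableEquiv.symm_apply_apply] at h1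
      rw [h1, lintegral_prod _ hh2.aemeasurable]
    rw [if_, ig_, ih_]
    exact pl1 F G H hFm hGm hHm key

lemma key_pi {n : ℕ} (K S : Set (Fin n → ℝ)) (hK : MeasurableSet K) (hS : MeasurableSet S)
    (hmid : ∀ x ∈ K, ∀ y ∈ K, (2⁻¹ : ℝ) • (x - y) ∈ S) : volume K ≤ volume S := by
  set L : Set (Fin n → ℝ) := (fun x => -x) '' K with hLdef
  have hLK : L = -K := by
    ext z
    simp [hLdef, Set.mem_neg, Set.mem_image]
  have hLm : MeasurableSet L := by rw [hLK]; exact hK.neg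
  have hvolL : volume L = volume K := by rw [hLK]; exact Measure.measure_neg volume K
  have hyp : ∀ x y, K.indicator (1 : (Fin n → ℝ) → ℝ≥0∞) x * L.indicator 1 y ≤
      S.indicator (1 : (Fin n → ℝ) → ℝ≥0∞) ((2⁻¹ : ℝ) • (x + y)) ^ 2 := by
    intro x y
    by_cases hx : x ∈ K
    · by_cases hy : y ∈ L
      · obtain ⟨y', hy', rfl⟩ := hy
        have hmem : (2⁻¹ : ℝ) • (x + -y') ∈ S := by
          have := hmid x hx y' hy'
          rwa [sub_eq_add_neg] at this
        rw [Set.indicator_of_mem hx, Set.indicator_of_mem (Set.mem_image_of_mem _ hy'),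
          Set.indicator_of_mem hmem]
        simp
      · rw [Set.indicator_of_notMem hy, mul_zero]; exact zero_le
    · rw [Set.indicator_of_notMem hx, zero_mul]; exact zero_le
  have hres := pl_pi n (K.indicator 1) (L.indicator 1) (S.indicator 1)
    (measurable_const.indicator hK) (measurable_const.indicator hLm)
    (measurable_const.indicator hS) hyp
  rw [lintegral_indicator_one hK, lintegral_indicator_one hLm, lintegral_indicator_one hS,
    hvolL] at hres
  by_contra hlt
  push_neg at hlt
  have h2 : volume S ^ 2 < volume K ^ 2 := ENNReal.pow_lt_pow_left two_ne_zero hlt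
  rw [sq (volume K)] at h2
  exact absurd (lt_of_lt_of_le h2 hres) (lt_irrefl _)

end PLHelpers

section Main
open Set

theorem vol_inter_translate_le {n : ℕ} (A B : Set (EuclideanSpace ℝ (Fin n)))
    (hA : Convex ℝ A) (hB : Convex ℝ B)
    (hAs : ∀ x ∈ A, -x ∈ A) (hBs : ∀ x ∈ B, -x ∈ B)
    (hcompact : ∀ v : EuclideanSpace ℝ (Fin n), IsCompact (A ∩ ((· + v) '' B))) :
    ∀ v : EuclideanSpace ℝ (Fin n),
      volume (A ∩ ((· + v) '' B)) ≤ volume (A ∩ B) := by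
  intro v
  set K := A ∩ ((· + v) '' B) with hKdef
  set S := A ∩ B with hSdef
  have hKc : IsCompact K := hcompact v
  have hSc : IsCompact S := by
    have h0 := hcompact 0
    have himg : ((· + (0 : EuclideanSpace ℝ (Fin n))) '' B) = B := by
      simp
    rwa [himg] at h0
  have hKm : MeasurableSet K := hKc.measurableSet
  have hSm : MeasurableSet S := hSc.measurableSet
  have hmid : ∀ x ∈ K, ∀ y ∈ K, (2⁻¹ : ℝ) • (x - y) ∈ S := by
    rintro x ⟨hxA, bx, hbxB, hbx⟩ y ⟨hyA, by', hbyB, hby⟩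
    have hbx' : bx + v = x := hbx
    have hby' : by' + v = y := hby
    constructor
    · -- in A
      have hmA := hA hxA (hAs y hyA) (by norm_num : (0:ℝ) ≤ 2⁻¹)
        (by norm_num : (0:ℝ) ≤ 2⁻¹) (by norm_num)
      have harg : (2⁻¹:ℝ) • x + (2⁻¹:ℝ) • (-y) = (2⁻¹:ℝ) • (x - y) := by
        rw [smul_neg, ← sub_eq_add_neg, ← smul_sub]
      rwa [harg] at hmA
    · -- in B
      have hmB := hB hbxB (hBs by' hbyB) (by norm_num : (0:ℝ) ≤ 2⁻¹)
        (by norm_num : (0:ℝ) ≤ 2⁻¹) (by norm_num)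
      have harg : (2⁻¹:ℝ) • bx + (2⁻¹:ℝ) • (-by') = (2⁻¹:ℝ) • (x - y) := by
        rw [← hbx', ← hby', smul_neg, ← sub_eq_add_neg, ← smul_sub]
        congr 1
        abel
      rwa [harg] at hmB
  -- transfer to pi space
  set φ := (MeasurableEquiv.toLp 2 (Fin n → ℝ)).symm with hφ
  have mp := EuclideanSpace.volume_preserving_symm_measurableEquiv_toLp (Fin n)
  have htrans : ∀ T : Set (EuclideanSpace ℝ (Fin n)), MeasurableSet T →
      volume T = volume (φ '' T) := by
    intro T hT
    have himgm : MeasurableSet (φ '' T) := φ.measurableSet_image.2 hT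
    have := mp.measure_preimage himgm.nullMeasurableSet
    rw [Set.preimage_image_eq _ φ.injective] at this
    exact this
  rw [htrans K hKm, htrans S hSm]
  refine key_pi (φ '' K) (φ '' S) (φ.measurableSet_image.2 hKm) (φ.measurableSet_image.2 hSm) ?_
  rintro _ ⟨x, hx, rfl⟩ _ ⟨y, hy, rfl⟩
  exact ⟨(2⁻¹ : ℝ) • (x - y), hmid x hx y hy, rfl⟩

end Main
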